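/- Fix an integer r ≥ 3 and λ ∈ [1/5, 1]. Then for every ε ∈ (0,1], f_{r,λ}(ε) < λ², where f_{r,λ}(ε) = (1/(r−1)) · Σ_{i=1}^{r−1} C(r−1, i) · (1−ε)^{r−1−i} · ε^{i−1} · λ² / ( λ + (1−λ)·2^{1−i} ). -/
import Mathlib


open Finset in
/-- The function `f_{r,λ}(ε)` from Lemma 4.3 of the paper. -/
noncomputable def f (r : ℕ) (lam ε : ℝ) : ℝ :=
  (1 / (r - 1 : ℝ)) * ∑ i ∈ Finset.Icc 1 (r - 1),
    ((r - 1).choose i : ℝ) * (1 - ε) ^ (r - 1 - i) * ε ^ (i - 1) * lam ^ 2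
      / (lam + (1 - lam) * (2 : ℝ) ^ ((1 : ℤ) - (i : ℤ)))

open Finset

lemma key_strict (i : ℕ) (hi : 2 ≤ i) (lam : ℝ) (hl : 1/5 ≤ lam) (hl1 : lam ≤ 1) :
    1 < (i : ℝ) * (lam + (1 - lam) * (2:ℝ) ^ ((1:ℤ) - (i:ℤ))) := by
  have ht0 : 0 < (2:ℝ) ^ ((1:ℤ) - (i:ℤ)) := zpow_pos (by norm_num) _
  have ht1 : (2:ℝ) ^ ((1:ℤ) - (i:ℤ)) ≤ 1/2 := by
    calc (2:ℝ) ^ ((1:ℤ) - (i:ℤ)) ≤ (2:ℝ) ^ (-1:ℤ) :=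
          zpow_le_zpow_right₀ (by norm_num) (by omega)
      _ = 1/2 := by norm_num
  have hi' : (2:ℝ) ≤ (i:ℝ) := by exact_mod_cast hi
  have h2 : 5 < (i:ℝ) * (1 + 4 * (2:ℝ) ^ ((1:ℤ) - (i:ℤ))) := by
    rcases lt_or_ge i 5 with h5 | h5
    · interval_cases i <;> norm_num
    · have h5' : (5:ℝ) ≤ (i:ℝ) := by exact_mod_cast h5
      nlinarith
  nlinarith [mul_nonneg (mul_nonneg (by positivity : (0:ℝ) ≤ (i:ℝ))
      (by linarith : (0:ℝ) ≤ lam - 1/5)) (by linarith : (0:ℝ) ≤ 1 - (2:ℝ) ^ ((1:ℤ) - (i:ℤ)))]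

lemma key_le (i : ℕ) (hi : 1 ≤ i) (lam : ℝ) (hl : 1/5 ≤ lam) (hl1 : lam ≤ 1) :
    1 ≤ (i : ℝ) * (lam + (1 - lam) * (2:ℝ) ^ ((1:ℤ) - (i:ℤ))) := by
  rcases eq_or_lt_of_le hi with h | h
  · rw [← h]; norm_num
  · exact (key_strict i h lam hl hl1).le

/-- Lemma 4.3: for `r ≥ 3` and `λ ∈ [1/5, 1]`, `f_{r,λ}(ε) < λ²` for all `ε ∈ (0,1]`. -/
theorem stmt7 (r : ℕ) (hr : 3 ≤ r) (lam : ℝ) (hlam : lam ∈ Set.Icc (1 / 5 : ℝ) 1)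
    (ε : ℝ) (hε : ε ∈ Set.Ioc (0 : ℝ) 1) :
    f r lam ε < lam ^ 2 := by
  obtain ⟨hl, hl1⟩ := hlam
  obtain ⟨hε0, hε1⟩ := hε
  set n := r - 1 with hn
  have hn2 : 2 ≤ n := by omega
  have hnR : (2:ℝ) ≤ (n:ℝ) := by exact_mod_cast hn2
  have hnpos : (0:ℝ) < (n:ℝ) := by linarith
  have hrn : (r:ℝ) - 1 = (n:ℝ) := by
    have hr1 : r = n + 1 := by omega
    rw [hr1]; push_cast; ring
  have hDpos : ∀ i : ℕ, 0 < lam + (1 - lam) * (2:ℝ) ^ ((1:ℤ) - (i:ℤ)) := fun i => by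
    have h := zpow_pos (show (0:ℝ) < 2 by norm_num) ((1:ℤ) - (i:ℤ))
    nlinarith
  have hεpow : ∀ k : ℕ, (0:ℝ) < ε ^ k := fun k => pow_pos hε0 k
  have h1ε : (0:ℝ) ≤ 1 - ε := by linarith
  set S : ℝ := ∑ i ∈ Icc 1 n, ((n.choose i : ℝ) * (1 - ε) ^ (n - i) * ε ^ (i - 1)
      / (lam + (1 - lam) * (2:ℝ) ^ ((1:ℤ) - (i:ℤ)))) with hS
  have hsum_eq : ∑ i ∈ Icc 1 n, (n:ℝ) * (((n-1).choose (i-1) : ℝ) * (1 - ε) ^ (n - i) * ε ^ (i - 1))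
      = (n:ℝ) := by
    rw [← Finset.mul_sum]
    have hre : ∑ i ∈ Icc 1 n, (((n-1).choose (i-1) : ℝ) * (1 - ε) ^ (n - i) * ε ^ (i - 1))
        = ∑ j ∈ range n, (((n-1).choose j : ℝ) * (1 - ε) ^ (n - 1 - j) * ε ^ j) := by
      rw [← Finset.Ico_add_one_right_eq_Icc, Finset.sum_Ico_eq_sum_range]
      apply Finset.sum_congr (by norm_num)
      intro j hj
      have e1 : 1 + j - 1 = j := by omega
      have e2 : n - (1 + j) = n - 1 - j := by omega
      rw [e1, e2]
    rw [hre]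
    have hb := add_pow ε (1 - ε) (n - 1)
    have hrange : n - 1 + 1 = n := by omega
    rw [hrange] at hb
    simp only [add_sub_cancel, one_pow] at hb
    rw [show ∑ j ∈ range n, (((n-1).choose j : ℝ) * (1 - ε) ^ (n - 1 - j) * ε ^ j)
        = ∑ j ∈ range n, ε ^ j * (1 - ε) ^ (n - 1 - j) * ((n-1).choose j : ℝ) from
      Finset.sum_congr rfl (fun j _ => by ring), ← hb]
    ring
  have hsum : S < (n:ℝ) := by
    rw [hS, ← hsum_eq]
    apply Finset.sum_lt_sum
    · intro i hi
      simp only [Finset.mem_Icc] at hi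
      rw [div_le_iff₀ (hDpos i)]
      have hch : (n:ℝ) * ((n-1).choose (i-1) : ℝ) = (i:ℝ) * (n.choose i : ℝ) := by
        have h1 : n - 1 + 1 = n := by omega
        have h2 : i - 1 + 1 = i := by omega
        have h3 : n * ((n-1).choose (i-1)) = i * (n.choose i) := by
          have := Nat.add_one_mul_choose_eq (n-1) (i-1)
          simp only [Nat.succ_eq_add_one, h1, h2] at this
          exact this.trans (Nat.mul_comm _ _)
        exact_mod_cast h3
      have hkey := key_le i hi.1 lam hl hl1
      have hM : (0:ℝ) ≤ (n.choose i : ℝ) * (1 - ε) ^ (n - i) * ε ^ (i - 1) := by positivity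
      have heq : (n:ℝ) * (((n-1).choose (i-1) : ℝ) * (1 - ε) ^ (n - i) * ε ^ (i - 1))
            * (lam + (1 - lam) * (2:ℝ) ^ ((1:ℤ) - (i:ℤ)))
          = ((n.choose i : ℝ) * (1 - ε) ^ (n - i) * ε ^ (i - 1))
            * ((i:ℝ) * (lam + (1 - lam) * (2:ℝ) ^ ((1:ℤ) - (i:ℤ)))) := by
        linear_combination ((1 - ε) ^ (n - i) * ε ^ (i - 1)
          * (lam + (1 - lam) * (2:ℝ) ^ ((1:ℤ) - (i:ℤ)))) * hch
      rw [heq]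
      exact le_mul_of_one_le_right hM hkey
    · refine ⟨n, Finset.mem_Icc.mpr ⟨by omega, le_refl n⟩, ?_⟩
      simp only [Nat.choose_self, Nat.sub_self, pow_zero, Nat.cast_one, one_mul, mul_one]
      rw [div_lt_iff₀ (hDpos n)]
      have hkey := key_strict n hn2 lam hl hl1
      nlinarith [hεpow (n-1)]
  have hfe : f r lam ε = 1 / (n:ℝ) * (lam ^ 2 * S) := by
    rw [hS]
    simp only [f, Finset.mul_sum]
    rw [hrn, ← hn]
    exact Finset.sum_congr rfl fun i _ => by ring
  have hl2 : 0 < lam ^ 2 := by positivity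
  rw [hfe]
  calc 1 / (n:ℝ) * (lam ^ 2 * S) < 1 / (n:ℝ) * (lam ^ 2 * n) := by
        apply mul_lt_mul_of_pos_left _ (by positivity)
        exact mul_lt_mul_of_pos_left hsum hl2
    _ = lam ^ 2 := by field_simp
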